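/- The number of meet-irreducible elements of L(n) is n(2^{n−1} − n). -/

import Mathlib

/-- The collections of subsets of `{1,...,n}` containing `∅`, the full set and all
singletons, and closed under intersection. -/
def LnSet (n : ℕ) : Set (Set (Finset (Fin n))) :=
  {S | ∅ ∈ S ∧ Finset.univ ∈ S ∧ (∀ i : Fin n, ({i} : Finset (Fin n)) ∈ S) ∧
    ∀ a ∈ S, ∀ b ∈ S, a ∩ b ∈ S}

namespace Stmt11Aux

variable {n : ℕ}

def Addable (S : Set (Finset (Fin n))) (γ : Finset (Fin n)) : Prop :=
  γ ∉ S ∧ insert γ S ∈ LnSet n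

def Cov (S T : Set (Finset (Fin n))) : Prop :=
  T ∈ LnSet n ∧ S ⊂ T ∧ ∀ U ∈ LnSet n, S ⊆ U → U ⊆ T → U = S ∨ U = T

lemma cov_insert (S : Set (Finset (Fin n))) {γ : Finset (Fin n)}
    (h : Addable S γ) : Cov S (insert γ S) := by
  obtain ⟨hγ, hL⟩ := h
  refine ⟨hL, ⟨Set.subset_insert _ _, fun hsub => hγ (hsub (Set.mem_insert _ _))⟩,
    fun U _ hSU hUT => ?_⟩
  by_cases hγU : γ ∈ U
  · right
    exact le_antisymm hUT (Set.insert_subset hγU hSU)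
  · left
    refine le_antisymm (fun x hx => ?_) hSU
    rcases hUT hx with h1 | h1
    · exact absurd (h1 ▸ hx) hγU
    · exact h1

lemma cov_exists (S : Set (Finset (Fin n))) (hS : S ∈ LnSet n)
    {T : Set (Finset (Fin n))} (h : Cov S T) :
    ∃ γ, Addable S γ ∧ T = insert γ S := by
  obtain ⟨hT, hST, hcov⟩ := h
  have hne : (T \ S).Nonempty := Set.nonempty_of_ssubset hST
  obtain ⟨γ, hγ, hmin⟩ := Set.exists_min_image (T \ S) Finset.card (Set.toFinite _) hne
  have hSsubT : S ⊆ T := hST.1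
  have hins : insert γ S ∈ LnSet n := by
    obtain ⟨h0, hu, hsing, hint⟩ := hS
    refine ⟨Set.mem_insert_of_mem _ h0, Set.mem_insert_of_mem _ hu,
      fun i => Set.mem_insert_of_mem _ (hsing i), ?_⟩
    have key : ∀ b ∈ S, γ ∩ b ∈ insert γ S := by
      intro b hb
      by_cases hbS : γ ∩ b ∈ S
      · exact Set.mem_insert_of_mem _ hbS
      · have hgbT : γ ∩ b ∈ T := hT.2.2.2 _ hγ.1 _ (hSsubT hb)
        have := hmin _ ⟨hgbT, hbS⟩
        have heq : γ ∩ b = γ :=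
          Finset.eq_of_subset_of_card_le (Finset.inter_subset_left) this
        rw [heq]; exact Set.mem_insert _ _
    rintro a (rfl | ha) b (rfl | hb)
    · rw [Finset.inter_self]; exact Set.mem_insert _ _
    · exact key _ hb
    · rw [Finset.inter_comm]; exact key _ ha
    · exact Set.mem_insert_of_mem _ (hint _ ha _ hb)
  have hU : insert γ S = S ∨ insert γ S = T :=
    hcov _ hins (Set.subset_insert _ _) (Set.insert_subset hγ.1 hSsubT)
  rcases hU with h1 | h1
  · exact absurd (h1 ▸ Set.mem_insert γ S) hγ.2
  · exact ⟨γ, ⟨hγ.2, hins⟩, h1.symm⟩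

lemma uniqueCov_iff (S : Set (Finset (Fin n))) (hS : S ∈ LnSet n) :
    (∃! T, Cov S T) ↔ (∃! γ, Addable S γ) := by
  constructor
  · rintro ⟨T, hT, hTu⟩
    obtain ⟨γ, hγ, rfl⟩ := cov_exists S hS hT
    refine ⟨γ, hγ, fun γ' hγ' => ?_⟩
    have := hTu _ (cov_insert S hγ')
    have h1 : γ' ∈ insert γ S := this ▸ Set.mem_insert γ' S
    rcases h1 with h1 | h1
    · exact h1
    · exact absurd h1 hγ'.1
  · rintro ⟨γ, hγ, hγu⟩
    refine ⟨insert γ S, cov_insert S hγ, fun T hT => ?_⟩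
    obtain ⟨γ', hγ', rfl⟩ := cov_exists S hS hT
    rw [hγu _ hγ']


def Lset (i : Fin n) (σ : Finset (Fin n)) : Set (Finset (Fin n)) :=
  {γ | ¬(σ ⊆ γ ∧ i ∉ γ)}

lemma mem_lset {i : Fin n} {σ γ : Finset (Fin n)} :
    γ ∈ Lset i σ ↔ ¬(σ ⊆ γ ∧ i ∉ γ) := Iff.rfl

lemma not_mem_lset {i : Fin n} {σ γ : Finset (Fin n)} :
    γ ∉ Lset i σ ↔ σ ⊆ γ ∧ i ∉ γ := by simp [Lset]

lemma lset_mem (i : Fin n) (σ : Finset (Fin n)) (hσ : σ ⊆ Finset.univ.erase i)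
    (h2 : 2 ≤ σ.card) : Lset i σ ∈ LnSet n := by
  have hcard : ∀ γ : Finset (Fin n), γ.card ≤ 1 → γ ∈ Lset i σ := by
    intro γ hγ
    rw [mem_lset]
    rintro ⟨hsub, -⟩
    exact absurd (le_trans h2 (Finset.card_le_card hsub)) (by omega)
  refine ⟨hcard _ (by simp), ?_, fun j => hcard _ (by simp), ?_⟩
  · rw [mem_lset]; rintro ⟨-, hiu⟩; exact hiu (Finset.mem_univ i)
  · intro a ha b hb
    rw [mem_lset]
    rintro ⟨hsub, hi⟩
    rw [Finset.mem_inter, not_and_or] at hi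
    rcases hi with hi | hi
    · exact ha ⟨hsub.trans Finset.inter_subset_left, hi⟩
    · exact hb ⟨hsub.trans Finset.inter_subset_right, hi⟩

lemma i_not_mem_sigma {i : Fin n} {σ : Finset (Fin n)} (hσ : σ ⊆ Finset.univ.erase i) :
    i ∉ σ := fun h => (Finset.mem_erase.1 (hσ h)).1 rfl

lemma lset_uniqueAddable (i : Fin n) (σ : Finset (Fin n)) (hσ : σ ⊆ Finset.univ.erase i)
    (h2 : 2 ≤ σ.card) : ∃! γ, Addable (Lset i σ) γ := by
  have hiσ : i ∉ σ := i_not_mem_sigma hσ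
  have hσnot : σ ∉ Lset i σ := not_mem_lset.2 ⟨Finset.Subset.refl _, hiσ⟩
  obtain ⟨h0, hu, hsing, hint⟩ := lset_mem i σ hσ h2
  have hadd : Addable (Lset i σ) σ := by
    refine ⟨hσnot, Set.mem_insert_of_mem _ h0, Set.mem_insert_of_mem _ hu,
      fun j => Set.mem_insert_of_mem _ (hsing j), ?_⟩
    have key : ∀ b ∈ Lset i σ, σ ∩ b ∈ insert σ (Lset i σ) := by
      intro b hb
      by_cases hbS : σ ∩ b ∈ Lset i σ
      · exact Set.mem_insert_of_mem _ hbS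
      · obtain ⟨hsub, -⟩ := not_mem_lset.1 hbS
        have : σ ∩ b = σ :=
          Finset.Subset.antisymm Finset.inter_subset_left hsub
        rw [this]; exact Set.mem_insert _ _
    rintro a (rfl | ha) b (rfl | hb)
    · rw [Finset.inter_self]; exact Set.mem_insert _ _
    · exact key _ hb
    · rw [Finset.inter_comm]; exact key _ ha
    · exact Set.mem_insert_of_mem _ (hint _ ha _ hb)
  refine ⟨σ, hadd, fun γ hγ => ?_⟩
  obtain ⟨hγnot, hγL⟩ := hγ
  obtain ⟨hsub, hiγ⟩ := not_mem_lset.1 hγnot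
  by_contra hne
  obtain ⟨j, hjγ, hjσ⟩ := Finset.exists_of_ssubset (lt_of_le_of_ne hsub (Ne.symm hne))
  set a : Finset (Fin n) := insert i (γ.erase j) with ha
  have haS : a ∈ Lset i σ := by
    rw [mem_lset]; rintro ⟨-, hia⟩; exact hia (Finset.mem_insert_self _ _)
  have hγa : γ ∩ a = γ.erase j := by
    ext x
    simp only [ha, Finset.mem_inter, Finset.mem_insert, Finset.mem_erase]
    constructor
    · rintro ⟨hxγ, rfl | ⟨hxj, -⟩⟩
      · exact absurd hxγ hiγ
      · exact ⟨hxj, hxγ⟩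
    · rintro ⟨hxj, hxγ⟩
      exact ⟨hxγ, Or.inr ⟨hxj, hxγ⟩⟩
  have hmem : γ ∩ a ∈ insert γ (Lset i σ) :=
    hγL.2.2.2 _ (Set.mem_insert _ _) _ (Set.mem_insert_of_mem _ haS)
  rw [hγa] at hmem
  rcases hmem with hmem | hmem
  · rw [← hmem] at hjγ
    exact Finset.notMem_erase j γ hjγ
  · refine (not_mem_lset.2 ⟨?_, ?_⟩) hmem
    · intro x hx
      exact Finset.mem_erase.2 ⟨fun h => hjσ (h ▸ hx), hsub hx⟩
    · intro h
      exact hiγ (Finset.mem_of_mem_erase h)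


lemma addable_of_key {S : Set (Finset (Fin n))} (hS : S ∈ LnSet n)
    {γ : Finset (Fin n)} (hγ : γ ∉ S)
    (key : ∀ b ∈ S, γ ∩ b ∈ S ∨ γ ∩ b = γ) : Addable S γ := by
  obtain ⟨h0, hu, hsing, hint⟩ := hS
  refine ⟨hγ, Set.mem_insert_of_mem _ h0, Set.mem_insert_of_mem _ hu,
    fun j => Set.mem_insert_of_mem _ (hsing j), ?_⟩
  have key' : ∀ b ∈ S, γ ∩ b ∈ insert γ S := fun b hb => by
    rcases key b hb with h | h
    · exact Set.mem_insert_of_mem _ h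
    · rw [h]; exact Set.mem_insert _ _
  rintro a (rfl | ha) b (rfl | hb)
  · rw [Finset.inter_self]; exact Set.mem_insert _ _
  · exact key' _ hb
  · rw [Finset.inter_comm]; exact key' _ ha
  · exact Set.mem_insert_of_mem _ (hint _ ha _ hb)

lemma exists_minimal {S : Set (Finset (Fin n))} :
    ∀ γ ∉ S, ∃ μ, μ ∉ S ∧ μ ⊆ γ ∧ ∀ β, β ∉ S → β ⊆ μ → β = μ := by
  intro γ
  induction γ using Finset.strongInductionOn with
  | _ γ ih =>
    intro hγ
    by_cases h : ∃ β, β ∉ S ∧ β ⊂ γ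
    · obtain ⟨β, hβ, hβγ⟩ := h
      obtain ⟨μ, h1, h2, h3⟩ := ih β hβγ hβ
      exact ⟨μ, h1, h2.trans hβγ.subset, h3⟩
    · push_neg at h
      exact ⟨γ, hγ, Finset.Subset.refl _, fun β hβ hsub => by
        by_contra hne; exact (h β hβ) (lt_of_le_of_ne hsub hne)⟩

lemma no_bad {S : Set (Finset (Fin n))} (hS : S ∈ LnSet n) {σ : Finset (Fin n)}
    (Hmin : ∀ γ, γ ∉ S → σ ⊆ γ) (Huniq : ∀ γ, Addable S γ → γ = σ) :
    ∀ γ, γ ∉ S → ∀ j ∈ γ, j ∉ σ → γ.erase j ∉ S := by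
  intro γ
  induction γ using Finset.strongInductionOn with
  | _ γ ih =>
  intro hγ j hjγ hjσ herase
  have hadd : Addable S γ := by
    refine addable_of_key hS hγ (fun b hb => ?_)
    by_cases h1 : γ ∩ b ∈ S
    · exact Or.inl h1
    by_cases h2 : γ ∩ b = γ
    · exact Or.inr h2
    exfalso
    by_cases hjb : j ∈ b
    · have hδss : γ ∩ b ⊂ γ := lt_of_le_of_ne Finset.inter_subset_left h2
      have hjδ : j ∈ γ ∩ b := Finset.mem_inter.2 ⟨hjγ, hjb⟩
      apply ih (γ ∩ b) hδss h1 j hjδ hjσ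
      have heq : (γ ∩ b).erase j = (γ.erase j) ∩ b := by
        ext x; simp only [Finset.mem_erase, Finset.mem_inter]; tauto
      rw [heq]
      exact hS.2.2.2 _ herase _ hb
    · apply h1
      have heq : γ ∩ b = (γ.erase j) ∩ b := by
        ext x
        simp only [Finset.mem_erase, Finset.mem_inter]
        constructor
        · rintro ⟨h3, h4⟩; exact ⟨⟨fun he => hjb (he ▸ h4), h3⟩, h4⟩
        · rintro ⟨⟨-, h3⟩, h4⟩; exact ⟨h3, h4⟩
      rw [heq]
      exact hS.2.2.2 _ herase _ hb
  exact hjσ (Huniq γ hadd ▸ hjγ)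

lemma down_closed {S : Set (Finset (Fin n))} {σ : Finset (Fin n)}
    (hnb : ∀ γ, γ ∉ S → ∀ j ∈ γ, j ∉ σ → γ.erase j ∉ S) :
    ∀ γ, γ ∉ S → ∀ β, σ ⊆ β → β ⊆ γ → β ∉ S := by
  intro γ
  induction γ using Finset.strongInductionOn with
  | _ γ ih =>
  intro hγ β hσβ hβγ
  by_cases heq : β = γ
  · exact heq ▸ hγ
  · obtain ⟨j, hjγ, hjβ⟩ := Finset.exists_of_ssubset (lt_of_le_of_ne hβγ heq)
    have hjσ : j ∉ σ := fun h => hjβ (hσβ h)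
    have h1 : γ.erase j ∉ S := hnb γ hγ j hjγ hjσ
    have h2 : β ⊆ γ.erase j := fun x hx =>
      Finset.mem_erase.2 ⟨fun he => hjβ (he ▸ hx), hβγ hx⟩
    exact ih _ (Finset.erase_ssubset hjγ) h1 β hσβ h2

lemma exists_max {S : Set (Finset (Fin n))} (hS : S ∈ LnSet n) :
    ∀ m : ℕ, ∀ γ : Finset (Fin n), γ ∉ S → n - 1 - γ.card ≤ m →
      ∃ τ, τ ∉ S ∧ γ ⊆ τ ∧ τ.card = n - 1 := by
  have base : ∀ γ : Finset (Fin n), γ ∉ S → n - 1 ≤ γ.card →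
      ∃ τ, τ ∉ S ∧ γ ⊆ τ ∧ τ.card = n - 1 := by
    intro γ hγ hge
    have hle : γ.card ≤ n := by
      simpa using Finset.card_le_card (Finset.subset_univ γ)
    have hne : γ.card ≠ n := by
      intro h
      apply hγ
      have : γ = Finset.univ := Finset.eq_univ_of_card γ (by simpa using h)
      rw [this]; exact hS.2.1
    exact ⟨γ, hγ, Finset.Subset.refl _, by omega⟩
  intro m
  induction m with
  | zero =>
    intro γ hγ hm
    exact base γ hγ (by omega)
  | succ m ih =>
    intro γ hγ hm
    by_cases hge : n - 1 ≤ γ.card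
    · exact base γ hγ hge
    · push_neg at hge
      have hsd : 1 < (Finset.univ \ γ).card := by
        rw [Finset.card_sdiff_of_subset (Finset.subset_univ γ), Finset.card_univ, Fintype.card_fin]
        omega
      obtain ⟨k, hk, l, hl, hkl⟩ := Finset.one_lt_card.1 hsd
      have hkγ : k ∉ γ := (Finset.mem_sdiff.1 hk).2
      have hlγ : l ∉ γ := (Finset.mem_sdiff.1 hl).2
      have hint : insert k γ ∩ insert l γ = γ := by
        ext x
        simp only [Finset.mem_inter, Finset.mem_insert]
        constructor
        · rintro ⟨rfl | h1, h2 | h2⟩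
          · exact absurd h2 hkl
          · exact h2
          · exact h1
          · exact h1
        · intro h; exact ⟨Or.inr h, Or.inr h⟩
      have hor : insert k γ ∉ S ∨ insert l γ ∉ S := by
        by_contra h
        push_neg at h
        exact hγ (hint ▸ hS.2.2.2 _ h.1 _ h.2)
      rcases hor with h | h
      · obtain ⟨τ, h1, h2, h3⟩ := ih (insert k γ) h
          (by rw [Finset.card_insert_of_notMem hkγ]; omega)
        exact ⟨τ, h1, (Finset.subset_insert _ _).trans h2, h3⟩
      · obtain ⟨τ, h1, h2, h3⟩ := ih (insert l γ) h
          (by rw [Finset.card_insert_of_notMem hlγ]; omega)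
        exact ⟨τ, h1, (Finset.subset_insert _ _).trans h2, h3⟩

lemma mi_forward (S : Set (Finset (Fin n))) (hS : S ∈ LnSet n)
    (h : ∃! γ, Addable S γ) :
    ∃ i σ, σ ⊆ Finset.univ.erase i ∧ 2 ≤ σ.card ∧ S = Lset i σ := by
  obtain ⟨σ, hσadd, huniq'⟩ := h
  have Huniq : ∀ γ, Addable S γ → γ = σ := fun γ hγ => huniq' γ hγ
  have hσS : σ ∉ S := hσadd.1
  have Hmin : ∀ γ, γ ∉ S → σ ⊆ γ := by
    intro γ hγ
    obtain ⟨μ, h1, h2, h3⟩ := exists_minimal γ hγ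
    have hμ : Addable S μ := addable_of_key hS h1 (fun b hb => by
      by_cases h4 : μ ∩ b ∈ S
      · exact Or.inl h4
      · exact Or.inr (h3 _ h4 Finset.inter_subset_left))
    rw [← Huniq μ hμ]; exact h2
  have hnb := no_bad hS Hmin Huniq
  have hdc := down_closed hnb
  have h2card : 2 ≤ σ.card := by
    by_contra hlt
    push_neg at hlt
    rcases (by omega : σ.card = 0 ∨ σ.card = 1) with h | h
    · exact hσS (Finset.card_eq_zero.1 h ▸ hS.1)
    · obtain ⟨j, rfl⟩ := Finset.card_eq_one.1 h
      exact hσS (hS.2.2.1 j)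
  obtain ⟨τ, hτS, hστ, hτcard⟩ := exists_max hS (n - 1) σ hσS (Nat.sub_le _ _)
  have hτu : τ ≠ Finset.univ := by rintro rfl; exact hτS hS.2.1
  have hτlt : τ.card < n := by
    have := Finset.card_lt_card (lt_of_le_of_ne (Finset.subset_univ τ) hτu)
    simpa using this
  have hmiss : ∀ τ' : Finset (Fin n), τ'.card = n - 1 →
      ∃ i : Fin n, τ' = Finset.univ.erase i := by
    intro τ' hc
    have h1 : (Finset.univ \ τ').card = 1 := by
      rw [Finset.card_sdiff_of_subset (Finset.subset_univ τ'), Finset.card_univ, Fintype.card_fin, hc]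
      omega
    obtain ⟨i, hi⟩ := Finset.card_eq_one.1 h1
    refine ⟨i, ?_⟩
    ext x
    have hx : x ∉ τ' ↔ x = i := by
      rw [← Finset.mem_singleton, ← hi, Finset.mem_sdiff]
      simp
    simp only [Finset.mem_erase, Finset.mem_univ, and_true]
    constructor
    · intro hxτ
      intro he
      exact (hx.2 he) hxτ
    · intro hne
      by_contra hxτ
      exact hne (hx.1 hxτ)
  obtain ⟨i, hτeq⟩ := hmiss τ hτcard
  have hiτ : i ∉ τ := by rw [hτeq]; simp
  have hmaxu : ∀ τ', τ' ∉ S → τ'.card = n - 1 → τ' = τ := by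
    intro τ' hτ'S hτ'card
    by_contra hne
    obtain ⟨i', hτ'eq⟩ := hmiss τ' hτ'card
    have hii' : i' ≠ i := by
      intro he
      exact hne (by rw [hτ'eq, he, ← hτeq])
    have hi'τ' : i' ∉ τ' := by rw [hτ'eq]; simp
    have hστ' : σ ⊆ τ' := Hmin τ' hτ'S
    have hi'σ : i' ∉ σ := fun hh => hi'τ' (hστ' hh)
    have hγ'τ : insert i' σ ⊆ τ := by
      intro x hx
      rcases Finset.mem_insert.1 hx with rfl | hx
      · rw [hτeq]; exact Finset.mem_erase.2 ⟨hii', Finset.mem_univ _⟩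
      · exact hστ hx
    have hγ'S : insert i' σ ∉ S := hdc τ hτS _ (Finset.subset_insert _ _) hγ'τ
    have hadd : Addable S (insert i' σ) := by
      refine addable_of_key hS hγ'S (fun b hb => ?_)
      by_cases h1 : insert i' σ ∩ b ∈ S
      · exact Or.inl h1
      right
      by_contra h2
      have hσb : σ ⊆ b := (Hmin _ h1).trans Finset.inter_subset_right
      have hi'b : i' ∉ b := by
        intro hi'b
        apply h2
        apply Finset.Subset.antisymm Finset.inter_subset_left
        intro x hx
        rcases Finset.mem_insert.1 hx with rfl | hx
        · exact Finset.mem_inter.2 ⟨Finset.mem_insert_self _ _, hi'b⟩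
        · exact Finset.mem_inter.2 ⟨Finset.mem_insert_of_mem hx, hσb hx⟩
      have hbτ' : b ⊆ τ' := by
        rw [hτ'eq]
        exact fun x hx => Finset.mem_erase.2 ⟨fun he => hi'b (he ▸ hx), Finset.mem_univ _⟩
      exact (hdc τ' hτ'S b hσb hbτ') hb
    have := Huniq _ hadd
    have hi'σ' : i' ∈ σ := this ▸ Finset.mem_insert_self i' σ
    exact hi'σ hi'σ'
  refine ⟨i, σ, by rw [← hτeq]; exact hστ, h2card, ?_⟩
  ext γ
  simp only [Lset, Set.mem_setOf_eq]
  constructor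
  · intro hγS hpair
    have hγτ : γ ⊆ τ := by
      rw [hτeq]
      exact fun x hx => Finset.mem_erase.2 ⟨fun he => hpair.2 (he ▸ hx), Finset.mem_univ _⟩
    exact (hdc τ hτS γ hpair.1 hγτ) hγS
  · intro hpair
    by_contra hγS
    apply hpair
    obtain ⟨τ'', h1, h2, h3⟩ := exists_max hS (n - 1) γ hγS (Nat.sub_le _ _)
    have := hmaxu τ'' h1 h3
    refine ⟨Hmin γ hγS, fun hiγ => ?_⟩
    exact hiτ (this ▸ h2 hiγ)


lemma lset_injOn :
    Set.InjOn (fun p : Fin n × Finset (Fin n) => Lset p.1 p.2)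
      {p | p.2 ⊆ Finset.univ.erase p.1 ∧ 2 ≤ p.2.card} := by
  rintro ⟨i, σ⟩ ⟨hσ, -⟩ ⟨i', σ'⟩ ⟨hσ', -⟩ heq
  simp only at heq
  have hiσ : i ∉ σ := fun h => (Finset.mem_erase.1 (hσ h)).1 rfl
  have hi'σ' : i' ∉ σ' := fun h => (Finset.mem_erase.1 (hσ' h)).1 rfl
  have key : ∀ (j j' : Fin n) (ρ ρ' : Finset (Fin n)), j ∉ ρ → Lset j ρ = Lset j' ρ' →
      ρ' ⊆ ρ := by
    intro j j' ρ ρ' hjρ he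
    have h1 : ρ ∉ Lset j ρ := not_mem_lset.2 ⟨Finset.Subset.refl _, hjρ⟩
    rw [he] at h1
    exact (not_mem_lset.1 h1).1
  have hσeq : σ = σ' := Finset.Subset.antisymm (key i' i σ' σ hi'σ' heq.symm)
    (key i i' σ σ' hiσ heq)
  have hieq : i = i' := by
    have h1 : Finset.univ.erase i ∉ Lset i σ := not_mem_lset.2 ⟨hσ, by simp⟩
    rw [heq] at h1
    obtain ⟨-, h2⟩ := not_mem_lset.1 h1
    by_contra hne
    exact h2 (Finset.mem_erase.2 ⟨fun h => hne h.symm, Finset.mem_univ _⟩)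
  rw [Prod.mk.injEq]
  exact ⟨hieq, hσeq⟩

lemma per_i_count (i : Fin n) :
    (((Finset.univ.erase i).powerset).filter (fun σ => 2 ≤ σ.card)).card
      = 2 ^ (n - 1) - n := by
  have hn : 0 < n := i.pos
  have hec : (Finset.univ.erase i).card = n - 1 := by
    rw [Finset.card_erase_of_mem (Finset.mem_univ i), Finset.card_univ, Fintype.card_fin]
  have htot : ((Finset.univ.erase i).powerset).card = 2 ^ (n - 1) := by
    rw [Finset.card_powerset, hec]
  have hsplit := Finset.card_filter_add_card_filter_not
    (s := (Finset.univ.erase i).powerset) (fun σ : Finset (Fin n) => 2 ≤ σ.card)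
  have hB : (((Finset.univ.erase i).powerset).filter (fun σ => ¬ 2 ≤ σ.card))
      = insert (∅ : Finset (Fin n)) ((Finset.univ.erase i).image (fun j => {j})) := by
    ext σ
    simp only [Finset.mem_filter, Finset.mem_powerset, Finset.mem_insert, Finset.mem_image,
      not_le]
    constructor
    · rintro ⟨hsub, hc⟩
      rcases (by omega : σ.card = 0 ∨ σ.card = 1) with h | h
      · exact Or.inl (Finset.card_eq_zero.1 h)
      · obtain ⟨j, rfl⟩ := Finset.card_eq_one.1 h
        exact Or.inr ⟨j, hsub (Finset.mem_singleton_self j), rfl⟩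
    · rintro (rfl | ⟨j, hj, rfl⟩)
      · exact ⟨Finset.empty_subset _, by simp⟩
      · exact ⟨Finset.singleton_subset_iff.2 hj, by simp⟩
  have hBcard : (((Finset.univ.erase i).powerset).filter (fun σ => ¬ 2 ≤ σ.card)).card = n := by
    rw [hB, Finset.card_insert_of_notMem, Finset.card_image_of_injective]
    · rw [hec]; omega
    · intro a b hab
      simpa using hab
    · intro h
      obtain ⟨j, -, hj⟩ := Finset.mem_image.1 h
      exact (Finset.singleton_ne_empty j) hj
  have hge : n ≤ 2 ^ (n - 1) := by
    calc n = (n - 1) + 1 := by omega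
    _ ≤ 2 ^ (n - 1) := Nat.lt_two_pow_self
  omega

lemma pairs_count :
    ({p : Fin n × Finset (Fin n) | p.2 ⊆ Finset.univ.erase p.1 ∧ 2 ≤ p.2.card}).ncard
      = n * (2 ^ (n - 1) - n) := by
  classical
  have hset : {p : Fin n × Finset (Fin n) | p.2 ⊆ Finset.univ.erase p.1 ∧ 2 ≤ p.2.card}
      = ↑(Finset.univ.filter
          (fun p : Fin n × Finset (Fin n) => p.2 ⊆ Finset.univ.erase p.1 ∧ 2 ≤ p.2.card)) := by
    ext p; simp
  rw [hset, Set.ncard_coe_finset]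
  rw [Finset.card_eq_sum_card_fiberwise (f := Prod.fst) (t := Finset.univ)
    (fun x _ => Finset.mem_univ _)]
  have hfib : ∀ i : Fin n,
      ((Finset.univ.filter
        (fun p : Fin n × Finset (Fin n) => p.2 ⊆ Finset.univ.erase p.1 ∧ 2 ≤ p.2.card)).filter
          (fun p => p.1 = i)).card = 2 ^ (n - 1) - n := by
    intro i
    rw [← per_i_count i]
    apply Finset.card_bij (fun p _ => p.2)
    · rintro ⟨j, σ⟩ hp
      simp only [Finset.mem_filter, Finset.mem_univ, true_and] at hp
      obtain ⟨⟨h1, h2⟩, rfl⟩ := hp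
      simp only [Finset.mem_filter, Finset.mem_powerset]
      exact ⟨h1, h2⟩
    · rintro ⟨j, σ⟩ hp ⟨j', σ'⟩ hp' he
      simp only [Finset.mem_filter] at hp hp'
      simp only at he
      rw [Prod.mk.injEq]
      exact ⟨hp.2.trans hp'.2.symm, he⟩
    · intro σ hσ
      simp only [Finset.mem_filter, Finset.mem_powerset] at hσ
      exact ⟨(i, σ), Finset.mem_filter.2 ⟨Finset.mem_filter.2
        ⟨Finset.mem_univ _, hσ.1, hσ.2⟩, rfl⟩, rfl⟩
  rw [Finset.sum_congr rfl (fun i _ => hfib i)]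
  simp [Finset.card_univ, mul_comm]


end Stmt11Aux

/-- The number of meet-irreducible elements of `L(n)` (elements covered by exactly one
element of `L(n)`) is `n * (2^(n-1) - n)`. -/
theorem stmt_11 (n : ℕ) :
    {S : Set (Finset (Fin n)) | S ∈ LnSet n ∧
      ∃! T : Set (Finset (Fin n)), T ∈ LnSet n ∧ S ⊂ T ∧
        ∀ U ∈ LnSet n, S ⊆ U → U ⊆ T → U = S ∨ U = T}.ncard
      = n * (2 ^ (n - 1) - n) := by
  classical
  have hset : {S : Set (Finset (Fin n)) | S ∈ LnSet n ∧
      ∃! T : Set (Finset (Fin n)), T ∈ LnSet n ∧ S ⊂ T ∧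
        ∀ U ∈ LnSet n, S ⊆ U → U ⊆ T → U = S ∨ U = T}
      = (fun p : Fin n × Finset (Fin n) => Stmt11Aux.Lset p.1 p.2) ''
        {p | p.2 ⊆ Finset.univ.erase p.1 ∧ 2 ≤ p.2.card} := by
    ext S
    simp only [Set.mem_setOf_eq, Set.mem_image]
    constructor
    · rintro ⟨hS, hT⟩
      have h1 : ∃! γ, Stmt11Aux.Addable S γ :=
        (Stmt11Aux.uniqueCov_iff S hS).1 hT
      obtain ⟨i, σ, h2, h3, h4⟩ := Stmt11Aux.mi_forward S hS h1
      exact ⟨(i, σ), ⟨h2, h3⟩, h4.symm⟩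
    · rintro ⟨⟨i, σ⟩, ⟨h2, h3⟩, rfl⟩
      have hS := Stmt11Aux.lset_mem i σ h2 h3
      exact ⟨hS, (Stmt11Aux.uniqueCov_iff _ hS).2
        (Stmt11Aux.lset_uniqueAddable i σ h2 h3)⟩
  rw [hset, Set.ncard_image_of_injOn Stmt11Aux.lset_injOn, Stmt11Aux.pairs_count]
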